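/- For m ∈ ℕ define P_m = Σ min(1 + j3, 1 + m − j1 − 2j2 − j3 − j4)·(j4 + 1)·x1^{j1} x2^{j2} x3^{j3} x4^{j4}, the sum being over all (j1, j2, j3, j4) ∈ ℕ⁴ with j1 + 2j2 + j3 + j4 ≤ m. Then in R[[t]] one has (Σ_{m=0}^∞ P_m t^m) · (1 − t)(1 − t·x1)(1 − t²·x2)(1 − t·x3)(1 − t²·x3)(1 − t·x4)² = 1. -/

import Mathlib

open scoped BigOperators

namespace Stmt2Aux

abbrev R4 := MvPolynomial (Fin 4) ℚ

def wt : Fin 6 → ℕ := ![1, 2, 1, 2, 1, 1]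
noncomputable def xv : Fin 6 → R4 := ![MvPolynomial.X 0, MvPolynomial.X 1, MvPolynomial.X 2,
  MvPolynomial.X 2, MvPolynomial.X 3, MvPolynomial.X 3]

lemma wt_pos (i : Fin 6) : 0 < wt i := by fin_cases i <;> decide

def VS (k m : ℕ) : Finset (Fin 6 → ℕ) :=
  (Fintype.piFinset (fun _ => Finset.range (m + 1))).filter
    (fun v => (∑ i, wt i * v i) ≤ m ∧ ∀ i : Fin 6, k ≤ (i : ℕ) → v i = 0)

noncomputable def S (k m : ℕ) : R4 := ∑ v ∈ VS k m, ∏ i, xv i ^ v i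

lemma mem_VS {k m : ℕ} {v : Fin 6 → ℕ} :
    v ∈ VS k m ↔ (∑ i, wt i * v i) ≤ m ∧ ∀ i : Fin 6, k ≤ (i : ℕ) → v i = 0 := by
  constructor
  · intro h
    exact (Finset.mem_filter.1 h).2
  · rintro ⟨h1, h2⟩
    refine Finset.mem_filter.2 ⟨Fintype.mem_piFinset.2 fun i => ?_, h1, h2⟩
    have h3 : wt i * v i ≤ ∑ j, wt j * v j :=
      Finset.single_le_sum (f := fun j => wt j * v j) (fun _ _ => Nat.zero_le _) (Finset.mem_univ i)
    have h4 : v i ≤ wt i * v i := Nat.le_mul_of_pos_left _ (wt_pos i)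
    exact Finset.mem_range.2 (by omega)

/-- generic stripping lemma -/
lemma strip {A : Type*} [CommRing A] (a : A) (k : ℕ) (hk : 0 < k) (F G : ℕ → A)
    (h0 : ∀ n, n < k → F n = G n)
    (h1 : ∀ n, F (n + k) = G (n + k) + a * F n) :
    PowerSeries.mk F * (1 - PowerSeries.C (R := A) a * PowerSeries.X ^ k) = PowerSeries.mk G := by
  ext n
  rw [mul_sub, mul_one, map_sub, PowerSeries.coeff_mk]
  have : PowerSeries.mk F * (PowerSeries.C (R := A) a * PowerSeries.X ^ k) =
      PowerSeries.C (R := A) a * (PowerSeries.mk F * PowerSeries.X ^ k) := by ring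
  rw [this, PowerSeries.coeff_C_mul, PowerSeries.coeff_mul_X_pow', PowerSeries.coeff_mk]
  rcases le_or_gt k n with h | h
  · rw [if_pos h]
    have := h1 (n - k)
    rw [Nat.sub_add_cancel h] at this
    rw [PowerSeries.coeff_mk, this]
    ring
  · rw [if_neg (not_le.2 h), mul_zero, sub_zero, h0 n h, PowerSeries.coeff_mk]

end Stmt2Aux

namespace Stmt2Aux

lemma wtsum_update (v : Fin 6 → ℕ) (k : Fin 6) (b : ℕ) :
    ∑ i, wt i * Function.update v k b i = (∑ i ∈ Finset.univ \ {k}, wt i * v i) + wt k * b := by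
  have h : (fun i => wt i * Function.update v k b i) =
      Function.update (fun i => wt i * v i) k (wt k * b) := by
    funext i; by_cases h : i = k <;> simp [Function.update, h]
  rw [h, Finset.sum_update_of_mem (Finset.mem_univ k)]
  ring

lemma wtsum_split (v : Fin 6 → ℕ) (k : Fin 6) :
    ∑ i, wt i * v i = (∑ i ∈ Finset.univ \ {k}, wt i * v i) + wt k * v k := by
  have := wtsum_update v k (v k)
  simpa [Function.update_eq_self] using this

lemma prod_update (v : Fin 6 → ℕ) (k : Fin 6) (b : ℕ) :
    ∏ i, xv i ^ Function.update v k b i = (∏ i ∈ Finset.univ \ {k}, xv i ^ v i) * xv k ^ b := by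
  have h : (fun i => xv i ^ Function.update v k b i) =
      Function.update (fun i => xv i ^ v i) k (xv k ^ b) := by
    funext i; by_cases h : i = k <;> simp [Function.update, h]
  rw [h, Finset.prod_update_of_mem (Finset.mem_univ k)]
  ring

lemma prod_split (v : Fin 6 → ℕ) (k : Fin 6) :
    ∏ i, xv i ^ v i = (∏ i ∈ Finset.univ \ {k}, xv i ^ v i) * xv k ^ v k := by
  have := prod_update v k (v k)
  simpa [Function.update_eq_self] using this

lemma S_lt (k : Fin 6) (n : ℕ) (hn : n < wt k) : S ((k : ℕ) + 1) n = S (k : ℕ) n := by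
  unfold S
  apply Finset.sum_congr _ (fun _ _ => rfl)
  ext v
  rw [mem_VS, mem_VS]
  constructor
  · rintro ⟨h1, h2⟩
    refine ⟨h1, fun i hi => ?_⟩
    rcases eq_or_lt_of_le hi with h | h
    · have hik : i = k := Fin.ext h.symm
      subst hik
      by_contra hv
      have h3 : wt i * v i ≤ ∑ j, wt j * v j :=
        Finset.single_le_sum (f := fun j => wt j * v j) (fun _ _ => Nat.zero_le _)
          (Finset.mem_univ i)
      have h4 : wt i ≤ wt i * v i := Nat.le_mul_of_pos_right _ (Nat.pos_of_ne_zero hv)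
      omega
    · exact h2 i h
  · rintro ⟨h1, h2⟩
    exact ⟨h1, fun i hi => h2 i (by omega)⟩

lemma S_step (k : Fin 6) (n : ℕ) :
    S ((k : ℕ) + 1) (n + wt k) = S (k : ℕ) (n + wt k) + xv k * S ((k : ℕ) + 1) n := by
  unfold S
  rw [← Finset.sum_filter_add_sum_filter_not (VS ((k : ℕ) + 1) (n + wt k)) (fun v => v k = 0)]
  congr 1
  · apply Finset.sum_congr _ (fun _ _ => rfl)
    ext v
    simp only [Finset.mem_filter, mem_VS]
    constructor
    · rintro ⟨⟨h1, h2⟩, h3⟩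
      refine ⟨h1, fun i hi => ?_⟩
      rcases eq_or_lt_of_le hi with h | h
      · rw [Fin.ext h.symm]; exact h3
      · exact h2 i (by omega)
    · rintro ⟨h1, h2⟩
      exact ⟨⟨h1, fun i hi => h2 i (by omega)⟩, h2 k le_rfl⟩
  · rw [Finset.mul_sum]
    refine Finset.sum_nbij' (fun v => Function.update v k (v k - 1))
      (fun v => Function.update v k (v k + 1)) ?_ ?_ ?_ ?_ ?_
    · rintro v hv
      simp only [Finset.mem_filter, mem_VS] at hv
      obtain ⟨⟨h1, h2⟩, h3⟩ := hv
      obtain ⟨c, hc⟩ : ∃ c, v k = c + 1 := ⟨v k - 1, by omega⟩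
      have hd : v k - 1 = c := by omega
      show Function.update v k (v k - 1) ∈ VS ((k : ℕ) + 1) n
      rw [hd, mem_VS]
      have hs := wtsum_split v k
      have hu := wtsum_update v k c
      rw [hc, Nat.mul_succ] at hs
      constructor
      · omega
      · intro i hi
        have hik : i ≠ k := by intro h; subst h; omega
        rw [Function.update_of_ne hik]
        exact h2 i (by omega)
    · rintro v hv
      rw [mem_VS] at hv
      obtain ⟨h1, h2⟩ := hv
      show Function.update v k (v k + 1) ∈ Finset.filter (fun v => ¬ v k = 0) (VS ((k : ℕ) + 1) (n + wt k))
      simp only [Finset.mem_filter, mem_VS]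
      have hu := wtsum_update v k (v k + 1)
      rw [Nat.mul_succ] at hu
      have hs := wtsum_split v k
      refine ⟨⟨by omega, fun i hi => ?_⟩, by simp [Function.update]⟩
      have hik : i ≠ k := by intro h; subst h; omega
      show Function.update v k (v k + 1) i = 0
      rw [Function.update_of_ne hik]
      exact h2 i hi
    · rintro v hv
      simp only [Finset.mem_filter] at hv
      funext i
      by_cases h : i = k
      · subst h
        show Function.update (Function.update v i (v i - 1)) i (Function.update v i (v i - 1) i + 1) i = v i
        simp only [Function.update_self]
        omega
      · show Function.update (Function.update v k (v k - 1)) k (Function.update v k (v k - 1) k + 1) i = v i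
        rw [Function.update_of_ne h, Function.update_of_ne h]
    · rintro v hv
      funext i
      by_cases h : i = k
      · subst h
        show Function.update (Function.update v i (v i + 1)) i (Function.update v i (v i + 1) i - 1) i = v i
        simp only [Function.update_self]
        omega
      · show Function.update (Function.update v k (v k + 1)) k (Function.update v k (v k + 1) k - 1) i = v i
        rw [Function.update_of_ne h, Function.update_of_ne h]
    · rintro v hv
      simp only [Finset.mem_filter] at hv
      obtain ⟨h1, h3⟩ := hv
      show ∏ i, xv i ^ v i = xv k * ∏ i, xv i ^ Function.update v k (v k - 1) i
      rw [prod_update v k (v k - 1), prod_split v k]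
      have : xv k ^ v k = xv k ^ (v k - 1) * xv k := by
        rw [← pow_succ]
        congr 1
        omega
      rw [this]
      ring

end Stmt2Aux

namespace Stmt2Aux

lemma mkS_step (k : Fin 6) :
    PowerSeries.mk (S ((k : ℕ) + 1)) *
      (1 - PowerSeries.C (R := R4) (xv k) * PowerSeries.X ^ wt k) = PowerSeries.mk (S (k : ℕ)) :=
  strip (xv k) (wt k) (wt_pos k) _ _ (S_lt k) (S_step k)

lemma S_zero (m : ℕ) : S 0 m = 1 := by
  unfold S
  have h : VS 0 m = {fun _ => 0} := by
    ext v
    rw [mem_VS, Finset.mem_singleton]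
    constructor
    · rintro ⟨h1, h2⟩
      funext i
      exact h2 i (Nat.zero_le _)
    · rintro rfl
      simp
  rw [h]
  simp

lemma base : PowerSeries.mk (S 0) * (1 - PowerSeries.X) = 1 := by
  have h := strip (A := R4) 1 1 one_pos (S 0) (fun n => if n = 0 then 1 else 0)
    (fun n hn => by interval_cases n; simp [S_zero])
    (fun n => by simp [S_zero])
  rw [map_one, one_mul, pow_one] at h
  rw [h]
  ext n
  simp [PowerSeries.coeff_one]

lemma step5 : PowerSeries.mk (S 6) *
    (1 - PowerSeries.C (R := R4) (MvPolynomial.X 3) * PowerSeries.X) = PowerSeries.mk (S 5) := by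
  have h := mkS_step 5
  rw [show xv 5 = MvPolynomial.X _ from rfl, show wt 5 = 1 from rfl, pow_one] at h
  exact h

lemma step4 : PowerSeries.mk (S 5) *
    (1 - PowerSeries.C (R := R4) (MvPolynomial.X 3) * PowerSeries.X) = PowerSeries.mk (S 4) := by
  have h := mkS_step 4
  rw [show xv 4 = MvPolynomial.X _ from rfl, show wt 4 = 1 from rfl, pow_one] at h
  exact h

lemma step3 : PowerSeries.mk (S 4) *
    (1 - PowerSeries.C (R := R4) (MvPolynomial.X 2) * PowerSeries.X ^ 2) = PowerSeries.mk (S 3) := by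
  have h := mkS_step 3
  rw [show xv 3 = MvPolynomial.X _ from rfl, show wt 3 = 2 from rfl] at h
  exact h

lemma step2 : PowerSeries.mk (S 3) *
    (1 - PowerSeries.C (R := R4) (MvPolynomial.X 2) * PowerSeries.X) = PowerSeries.mk (S 2) := by
  have h := mkS_step 2
  rw [show xv 2 = MvPolynomial.X _ from rfl, show wt 2 = 1 from rfl, pow_one] at h
  exact h

lemma step1 : PowerSeries.mk (S 2) *
    (1 - PowerSeries.C (R := R4) (MvPolynomial.X 1) * PowerSeries.X ^ 2) = PowerSeries.mk (S 1) := by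
  have h := mkS_step 1
  rw [show xv 1 = MvPolynomial.X _ from rfl, show wt 1 = 2 from rfl] at h
  exact h

lemma step0 : PowerSeries.mk (S 1) *
    (1 - PowerSeries.C (R := R4) (MvPolynomial.X 0) * PowerSeries.X) = PowerSeries.mk (S 0) := by
  have h := mkS_step 0
  rw [show xv 0 = MvPolynomial.X _ from rfl, show wt 0 = 1 from rfl, pow_one] at h
  exact h

end Stmt2Aux

namespace Stmt2Aux

lemma mem_J {m : ℕ} {j : ℕ × ℕ × ℕ × ℕ} :
    j ∈ (Finset.range (m + 1) ×ˢ Finset.range (m + 1) ×ˢ Finset.range (m + 1) ×ˢ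
          Finset.range (m + 1)).filter
        (fun j => j.1 + 2 * j.2.1 + j.2.2.1 + j.2.2.2 ≤ m) ↔
      j.1 + 2 * j.2.1 + j.2.2.1 + j.2.2.2 ≤ m := by
  simp only [Finset.mem_filter, Finset.mem_product, Finset.mem_range]
  omega

lemma P_eq (m : ℕ) :
    (∑ j ∈ (Finset.range (m + 1) ×ˢ Finset.range (m + 1) ×ˢ Finset.range (m + 1) ×ˢ
          Finset.range (m + 1)).filter
        (fun j => j.1 + 2 * j.2.1 + j.2.2.1 + j.2.2.2 ≤ m),
      ((min (1 + j.2.2.1) (1 + m - j.1 - 2 * j.2.1 - j.2.2.1 - j.2.2.2) * (j.2.2.2 + 1) : ℕ) :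
          MvPolynomial (Fin 4) ℚ) *
        MvPolynomial.X 0 ^ j.1 * MvPolynomial.X 1 ^ j.2.1 *
        MvPolynomial.X 2 ^ j.2.2.1 * MvPolynomial.X 3 ^ j.2.2.2) = S 6 m := by
  classical
  have stepA : ∀ j ∈ (Finset.range (m + 1) ×ˢ Finset.range (m + 1) ×ˢ Finset.range (m + 1) ×ˢ
          Finset.range (m + 1)).filter
        (fun j => j.1 + 2 * j.2.1 + j.2.2.1 + j.2.2.2 ≤ m),
      ((min (1 + j.2.2.1) (1 + m - j.1 - 2 * j.2.1 - j.2.2.1 - j.2.2.2) * (j.2.2.2 + 1) : ℕ) :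
          MvPolynomial (Fin 4) ℚ) *
        MvPolynomial.X 0 ^ j.1 * MvPolynomial.X 1 ^ j.2.1 *
        MvPolynomial.X 2 ^ j.2.2.1 * MvPolynomial.X 3 ^ j.2.2.2 =
      ∑ _p ∈ ((Finset.range (j.2.2.1 + 1)).filter
            (fun e => j.1 + 2 * j.2.1 + j.2.2.1 + j.2.2.2 + e ≤ m)) ×ˢ
          Finset.range (j.2.2.2 + 1),
        MvPolynomial.X 0 ^ j.1 * MvPolynomial.X 1 ^ j.2.1 *
        MvPolynomial.X 2 ^ j.2.2.1 * MvPolynomial.X 3 ^ j.2.2.2 := by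
    rintro ⟨j1, j2, j3, j4⟩ hj
    rw [mem_J] at hj
    simp only at hj ⊢
    rw [Finset.sum_const, Finset.card_product, Finset.card_range]
    have hE : (Finset.range (j3 + 1)).filter (fun e => j1 + 2 * j2 + j3 + j4 + e ≤ m) =
        Finset.range (min (1 + j3) (1 + m - j1 - 2 * j2 - j3 - j4)) := by
      ext e
      simp only [Finset.mem_filter, Finset.mem_range, lt_min_iff]
      omega
    rw [hE, Finset.card_range, nsmul_eq_mul, Nat.cast_mul]
    ring
  rw [Finset.sum_congr rfl stepA, Finset.sum_sigma']
  refine Finset.sum_nbij'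
    (fun a => ![a.1.1, a.1.2.1, a.1.2.2.1 - a.2.1, a.2.1, a.1.2.2.2 - a.2.2, a.2.2])
    (fun v => ⟨(v 0, v 1, v 2 + v 3, v 4 + v 5), (v 3, v 5)⟩) ?_ ?_ ?_ ?_ ?_
  · rintro ⟨⟨j1, j2, j3, j4⟩, e, g⟩ ha
    simp only [Finset.mem_sigma, mem_J, Finset.mem_product, Finset.mem_filter,
      Finset.mem_range] at ha
    obtain ⟨hs, ⟨he1, he2⟩, hg⟩ := ha
    rw [mem_VS]
    constructor
    · rw [Fin.sum_univ_six]
      show 1 * j1 + 2 * j2 + 1 * (j3 - e) + 2 * e + 1 * (j4 - g) + 1 * g ≤ m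
      omega
    · intro i hi
      exact absurd i.isLt (by omega)
  · intro v hv
    rw [mem_VS] at hv
    obtain ⟨h1, _⟩ := hv
    rw [Fin.sum_univ_six] at h1
    have h1' : 1 * v 0 + 2 * v 1 + 1 * v 2 + 2 * v 3 + 1 * v 4 + 1 * v 5 ≤ m := h1
    simp only [Finset.mem_sigma, mem_J, Finset.mem_product, Finset.mem_filter,
      Finset.mem_range]
    refine ⟨by omega, ⟨by omega, by omega⟩, by omega⟩
  · rintro ⟨⟨j1, j2, j3, j4⟩, e, g⟩ ha
    simp only [Finset.mem_sigma, mem_J, Finset.mem_product, Finset.mem_filter,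
      Finset.mem_range] at ha
    obtain ⟨hs, ⟨he1, he2⟩, hg⟩ := ha
    show (⟨(j1, j2, j3 - e + e, j4 - g + g), (e, g)⟩ :
        Σ _ : ℕ × ℕ × ℕ × ℕ, ℕ × ℕ) = ⟨(j1, j2, j3, j4), (e, g)⟩
    rw [show j3 - e + e = j3 by omega, show j4 - g + g = j4 by omega]
  · intro v hv
    funext i
    fin_cases i
    · rfl
    · rfl
    · show v 2 + v 3 - v 3 = v 2
      omega
    · rfl
    · show v 4 + v 5 - v 5 = v 4
      omega
    · rfl
  · rintro ⟨⟨j1, j2, j3, j4⟩, e, g⟩ ha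
    simp only [Finset.mem_sigma, mem_J, Finset.mem_product, Finset.mem_filter,
      Finset.mem_range] at ha
    obtain ⟨hs, ⟨he1, he2⟩, hg⟩ := ha
    obtain ⟨d, rfl⟩ : ∃ d, j3 = d + e := ⟨j3 - e, by omega⟩
    obtain ⟨f, rfl⟩ : ∃ f, j4 = f + g := ⟨j4 - g, by omega⟩
    rw [Fin.prod_univ_six]
    show MvPolynomial.X 0 ^ j1 * MvPolynomial.X 1 ^ j2 *
        MvPolynomial.X 2 ^ (d + e) * MvPolynomial.X 3 ^ (f + g) =
      MvPolynomial.X 0 ^ j1 * MvPolynomial.X 1 ^ j2 * MvPolynomial.X 2 ^ (d + e - e) *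
        MvPolynomial.X 2 ^ e * MvPolynomial.X 3 ^ (f + g - g) * MvPolynomial.X 3 ^ g
    rw [Nat.add_sub_cancel, Nat.add_sub_cancel, pow_add, pow_add]
    ring

end Stmt2Aux

open scoped BigOperators

/-- Over `R = ℚ[x1,x2,x3,x4]`, with
`P_m = ∑_{j1+2j2+j3+j4 ≤ m} min(1+j3, 1+m-j1-2j2-j3-j4)·(j4+1)·x1^j1 x2^j2 x3^j3 x4^j4`,
we have `(∑_m P_m t^m)·(1-t)(1-t·x1)(1-t²·x2)(1-t·x3)(1-t²·x3)(1-t·x4)² = 1` in `R[[t]]`. -/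
theorem stmt_2 :
    (PowerSeries.mk (fun m : ℕ =>
      ∑ j ∈ (Finset.range (m + 1) ×ˢ Finset.range (m + 1) ×ˢ Finset.range (m + 1) ×ˢ
            Finset.range (m + 1)).filter
          (fun j => j.1 + 2 * j.2.1 + j.2.2.1 + j.2.2.2 ≤ m),
        ((min (1 + j.2.2.1) (1 + m - j.1 - 2 * j.2.1 - j.2.2.1 - j.2.2.2) * (j.2.2.2 + 1) : ℕ) :
            MvPolynomial (Fin 4) ℚ) *
          MvPolynomial.X 0 ^ j.1 * MvPolynomial.X 1 ^ j.2.1 *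
          MvPolynomial.X 2 ^ j.2.2.1 * MvPolynomial.X 3 ^ j.2.2.2)) *
      ((1 - PowerSeries.X) *
        (1 - PowerSeries.C (R := MvPolynomial (Fin 4) ℚ) (MvPolynomial.X 0) * PowerSeries.X) *
        (1 - PowerSeries.C (R := MvPolynomial (Fin 4) ℚ) (MvPolynomial.X 1) * PowerSeries.X ^ 2) *
        (1 - PowerSeries.C (R := MvPolynomial (Fin 4) ℚ) (MvPolynomial.X 2) * PowerSeries.X) *
        (1 - PowerSeries.C (R := MvPolynomial (Fin 4) ℚ) (MvPolynomial.X 2) * PowerSeries.X ^ 2) *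
        (1 - PowerSeries.C (R := MvPolynomial (Fin 4) ℚ) (MvPolynomial.X 3) * PowerSeries.X) ^ 2) =
      1 := by
  have hmk : PowerSeries.mk (fun m : ℕ =>
      ∑ j ∈ (Finset.range (m + 1) ×ˢ Finset.range (m + 1) ×ˢ Finset.range (m + 1) ×ˢ
            Finset.range (m + 1)).filter
          (fun j => j.1 + 2 * j.2.1 + j.2.2.1 + j.2.2.2 ≤ m),
        ((min (1 + j.2.2.1) (1 + m - j.1 - 2 * j.2.1 - j.2.2.1 - j.2.2.2) * (j.2.2.2 + 1) : ℕ) :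
            MvPolynomial (Fin 4) ℚ) *
          MvPolynomial.X 0 ^ j.1 * MvPolynomial.X 1 ^ j.2.1 *
          MvPolynomial.X 2 ^ j.2.2.1 * MvPolynomial.X 3 ^ j.2.2.2) =
      PowerSeries.mk (Stmt2Aux.S 6) := by
    exact congrArg PowerSeries.mk (funext fun m => Stmt2Aux.P_eq m)
  rw [hmk]
  calc PowerSeries.mk (Stmt2Aux.S 6) *
      ((1 - PowerSeries.X) *
        (1 - PowerSeries.C (R := MvPolynomial (Fin 4) ℚ) (MvPolynomial.X 0) * PowerSeries.X) *
        (1 - PowerSeries.C (R := MvPolynomial (Fin 4) ℚ) (MvPolynomial.X 1) * PowerSeries.X ^ 2) *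
        (1 - PowerSeries.C (R := MvPolynomial (Fin 4) ℚ) (MvPolynomial.X 2) * PowerSeries.X) *
        (1 - PowerSeries.C (R := MvPolynomial (Fin 4) ℚ) (MvPolynomial.X 2) * PowerSeries.X ^ 2) *
        (1 - PowerSeries.C (R := MvPolynomial (Fin 4) ℚ) (MvPolynomial.X 3) * PowerSeries.X) ^ 2)
      = ((((((PowerSeries.mk (Stmt2Aux.S 6) *
          (1 - PowerSeries.C (R := MvPolynomial (Fin 4) ℚ) (MvPolynomial.X 3) * PowerSeries.X)) *
          (1 - PowerSeries.C (R := MvPolynomial (Fin 4) ℚ) (MvPolynomial.X 3) * PowerSeries.X)) *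
          (1 - PowerSeries.C (R := MvPolynomial (Fin 4) ℚ) (MvPolynomial.X 2) * PowerSeries.X ^ 2)) *
          (1 - PowerSeries.C (R := MvPolynomial (Fin 4) ℚ) (MvPolynomial.X 2) * PowerSeries.X)) *
          (1 - PowerSeries.C (R := MvPolynomial (Fin 4) ℚ) (MvPolynomial.X 1) * PowerSeries.X ^ 2)) *
          (1 - PowerSeries.C (R := MvPolynomial (Fin 4) ℚ) (MvPolynomial.X 0) * PowerSeries.X)) *
          (1 - PowerSeries.X) := by ring
    _ = 1 := by
      rw [Stmt2Aux.step5, Stmt2Aux.step4, Stmt2Aux.step3, Stmt2Aux.step2, Stmt2Aux.step1,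
        Stmt2Aux.step0, Stmt2Aux.base]
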